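/- Suppose n is odd and assumption (A6) holds. Then the generalized n-gene repressilator has exactly one steady state in (0,∞)^{2n} (the central steady state E_C). -/

import Mathlib

/-- A steady state of the generalized `n`-gene repressilator with transcription-rate
functions `a i`, mRNA degradation-rate functions `dr i`, protein degradation-rate
functions `dp i`, and translation-rate functions `k i`: a point
`(r, p) ∈ (0,∞)^{2n}` with `dr i (r i) = a i (p (i-1))` and `dp i (p i) = k i (r i)`
for all `i` (indices mod `n`). -/
def IsSteadyState (n : ℕ) [NeZero n] (a dr dp k : Fin n → ℝ → ℝ)
    (r p : Fin n → ℝ) : Prop :=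
  (∀ i, 0 < r i) ∧ (∀ i, 0 < p i) ∧
    (∀ i, dr i (r i) = a i (p (i - 1))) ∧ (∀ i, dp i (p i) = k i (r i))

open Set
open Fin.NatCast

lemma exists_inverse (f : ℝ → ℝ) {B : ℝ} (hB : 0 ≤ B)
    (hf : ContinuousOn f (Set.Icc 0 B)) (hmono : StrictMonoOn f (Set.Icc 0 B)) :
    ∃ g : ℝ → ℝ, ContinuousOn g (Set.Icc (f 0) (f B)) ∧
      ∀ y ∈ Set.Icc (f 0) (f B), g y ∈ Set.Icc 0 B ∧ f (g y) = y := by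
  have h0B : (0:ℝ) ∈ Icc 0 B := ⟨le_refl _, hB⟩
  have hBB : B ∈ Icc (0:ℝ) B := ⟨hB, le_refl _⟩
  have hsurj : SurjOn f (Icc 0 B) (Icc (f 0) (f B)) := intermediate_value_Icc hB hf
  have hmaps : MapsTo f (Icc 0 B) (Icc (f 0) (f B)) := fun x hx =>
    ⟨hmono.monotoneOn h0B hx hx.1, hmono.monotoneOn hx hBB hx.2⟩
  have hbij : Function.Bijective (hmaps.restrict f _ _) := by
    constructor
    · intro x y hxy
      exact Subtype.ext (hmono.injOn x.2 y.2 (congrArg Subtype.val hxy))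
    · rintro ⟨y, hy⟩
      obtain ⟨x, hx, hfx⟩ := hsurj hy
      exact ⟨⟨x, hx⟩, Subtype.ext hfx⟩
  let e : Icc (0:ℝ) B ≃ Icc (f 0) (f B) := Equiv.ofBijective _ hbij
  have hce : Continuous e := hf.mapsToRestrict hmaps
  let H : Icc (0:ℝ) B ≃ₜ Icc (f 0) (f B) := hce.homeoOfEquivCompactToT2
  refine ⟨fun y => if hy : y ∈ Icc (f 0) (f B) then (H.symm ⟨y, hy⟩ : ℝ) else 0, ?_, ?_⟩
  · rw [continuousOn_iff_continuous_restrict]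
    have : (Icc (f 0) (f B)).domRestrict
        (fun y => if hy : y ∈ Icc (f 0) (f B) then (H.symm ⟨y, hy⟩ : ℝ) else 0)
        = fun y => (H.symm y : ℝ) := funext fun y => by
      rw [Set.domRestrict_apply, dif_pos y.2]
    rw [this]
    exact continuous_subtype_val.comp H.symm.continuous
  · intro y hy
    dsimp only
    rw [dif_pos hy]
    refine ⟨(H.symm ⟨y, hy⟩).2, ?_⟩
    have := congrArg Subtype.val (H.apply_symm_apply ⟨y, hy⟩)
    exact this

lemma fin_sub_one_val {n : ℕ} [NeZero n] (i : Fin n) (hi : i.val ≠ 0) :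
    (i - 1).val = i.val - 1 := by
  have hn : 1 < n := lt_of_le_of_lt (Nat.one_le_iff_ne_zero.2 hi) i.isLt
  have h1 : (1 : Fin n).val = 1 := by
    rw [Fin.val_one']
    exact Nat.mod_eq_of_lt hn
  rw [Fin.sub_def, h1]
  show (n - 1 + i.val) % n = i.val - 1
  have h2 : n - 1 + i.val = (i.val - 1) + n := by omega
  rw [h2, Nat.add_mod_right, Nat.mod_eq_of_lt (by omega)]

lemma fin_zero_sub_one (n : ℕ) [NeZero n] : (0 : Fin n) - 1 = ((n - 1 : ℕ) : Fin n) := by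
  have hn : 0 < n := Nat.pos_of_ne_zero (NeZero.ne n)
  apply Fin.ext
  rw [Fin.sub_def, Fin.val_natCast]
  show (n - (1 : Fin n).val + 0) % n = (n - 1) % n
  rw [Fin.val_one', Nat.add_zero]
  rcases Nat.lt_or_ge 1 n with h | h
  · rw [Nat.mod_eq_of_lt h]
  · have : n = 1 := by omega
    subst this
    decide

lemma fin_cast_succ_sub_one {n : ℕ} [NeZero n] {m : ℕ} (h : m + 1 < n) :
    ((m + 1 : ℕ) : Fin n) - 1 = (m : Fin n) := by
  apply Fin.ext
  have hv : ((m + 1 : ℕ) : Fin n).val = m + 1 := Fin.val_cast_of_lt h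
  rw [fin_sub_one_val _ (by rw [hv]; omega), hv, Fin.val_cast_of_lt (by omega)]
  omega

/-- Iterated composition of the per-gene maps. -/
def iterComp {n : ℕ} [NeZero n] (F : Fin n → ℝ → ℝ) : ℕ → ℝ → ℝ
  | 0 => id
  | (m+1) => fun q => F (m : Fin n) (iterComp F m q)

/-- For `n` odd, under the standing assumptions (A1)–(A4) on the transcription-rate
functions, (D1)–(D3) on the degradation- and translation-rate functions, and
assumption (A6), the generalized `n`-gene repressilator has exactly one steady
state in `(0,∞)^{2n}` (the central steady state `E_C`). -/
theorem odd_unique_steady_state (n : ℕ) [NeZero n] (hn : Odd n)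
    (a dr dp k : Fin n → ℝ → ℝ)
    (hA1 : ∀ i, ContDiffOn ℝ 1 (a i) (Set.Ici 0))
    (hA2 : ∀ i, ∀ x ≥ (0 : ℝ), 0 ≤ a i x)
    (hA3 : ∀ i, StrictAntiOn (a i) (Set.Ici 0))
    (hA4 : ∀ i, 0 < a i 0)
    (hD1 : ∀ i, ContDiffOn ℝ 1 (dr i) (Set.Ici 0) ∧ ContDiffOn ℝ 1 (dp i) (Set.Ici 0) ∧
      ContDiffOn ℝ 1 (k i) (Set.Ici 0))
    (hD2 : ∀ i, dr i 0 = 0 ∧ dp i 0 = 0 ∧ k i 0 = 0)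
    (hD3 : ∀ i, StrictMonoOn (dr i) (Set.Ici 0) ∧ StrictMonoOn (dp i) (Set.Ici 0) ∧
      StrictMonoOn (k i) (Set.Ici 0))
    -- `rbar i` is the unique point in `(0,∞)` with `dr i (rbar i) = a i 0`
    (rbar : Fin n → ℝ) (hrbar_pos : ∀ i, 0 < rbar i)
    (hrbar : ∀ i, dr i (rbar i) = a i 0)
    -- (A6): `sup dr i > a i 0` and `sup dp i > k i (rbar i)`
    (hA6 : ∀ i, (∃ x ≥ (0 : ℝ), dr i x > a i 0) ∧ (∃ x ≥ (0 : ℝ), dp i x > k i (rbar i))) :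
    ∃! rp : (Fin n → ℝ) × (Fin n → ℝ), IsSteadyState n a dr dp k rp.1 rp.2 := by
  obtain ⟨m, rfl⟩ : ∃ m, n = m + 1 :=
    ⟨n - 1, (Nat.succ_pred_eq_of_pos (Nat.pos_of_ne_zero (NeZero.ne n))).symm⟩
  -- inverse functions
  have key : ∀ i : Fin (m+1), ∃ gi hi : ℝ → ℝ, ∃ Xi : ℝ, 0 ≤ Xi ∧ k i (rbar i) ≤ dp i Xi ∧
      ContinuousOn gi (Set.Icc 0 (a i 0)) ∧
      (∀ y ∈ Set.Icc 0 (a i 0), gi y ∈ Set.Icc 0 (rbar i) ∧ dr i (gi y) = y) ∧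
      ContinuousOn hi (Set.Icc 0 (dp i Xi)) ∧
      (∀ y ∈ Set.Icc 0 (dp i Xi), hi y ∈ Set.Icc 0 Xi ∧ dp i (hi y) = y) := by
    intro i
    have hIccR : Set.Icc (0:ℝ) (rbar i) ⊆ Set.Ici 0 := Set.Icc_subset_Ici_self
    obtain ⟨gi, hgc, hgp⟩ := exists_inverse (dr i) (hrbar_pos i).le
      (((hD1 i).1).continuousOn.mono hIccR) (((hD3 i).1).mono hIccR)
    rw [(hD2 i).1, hrbar i] at hgc hgp
    obtain ⟨Xi, hXi0, hXik⟩ := (hA6 i).2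
    have hIccX : Set.Icc (0:ℝ) Xi ⊆ Set.Ici 0 := Set.Icc_subset_Ici_self
    obtain ⟨hi', hhc, hhp⟩ := exists_inverse (dp i) hXi0
      (((hD1 i).2.1).continuousOn.mono hIccX) (((hD3 i).2.1).mono hIccX)
    rw [(hD2 i).2.1] at hhc hhp
    exact ⟨gi, hi', Xi, hXi0, hXik.le, hgc, hgp, hhc, hhp⟩
  choose ginv hinv X hX0 hXk hgc hg hhc hh using key
  -- basic facts about a
  have ha_pos : ∀ (i : Fin (m+1)) (q : ℝ), 0 ≤ q → 0 < a i q := fun i q hq =>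
    lt_of_le_of_lt (hA2 i (q+1) (by linarith))
      (hA3 i (Set.mem_Ici.2 hq) (Set.mem_Ici.2 (by linarith)) (lt_add_one q))
  have ha_mem : ∀ (i : Fin (m+1)) (q : ℝ), 0 ≤ q → a i q ∈ Set.Icc 0 (a i 0) := fun i q hq =>
    ⟨(ha_pos i q hq).le,
      (hA3 i).antitoneOn (Set.mem_Ici.2 le_rfl) (Set.mem_Ici.2 hq) hq⟩
  -- k facts
  have hk_nonneg : ∀ (i : Fin (m+1)) (x : ℝ), 0 ≤ x → 0 ≤ k i x := by
    intro i x hx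
    rcases eq_or_lt_of_le hx with h | h
    · rw [← h, (hD2 i).2.2]
    · have := (hD3 i).2.2 (Set.mem_Ici.2 le_rfl) (Set.mem_Ici.2 hx) h
      rw [(hD2 i).2.2] at this
      exact this.le
  have hk_mem : ∀ (i : Fin (m+1)) (x : ℝ), x ∈ Set.Icc 0 (rbar i) →
      k i x ∈ Set.Icc 0 (dp i (X i)) := by
    intro i x hx
    refine ⟨hk_nonneg i x hx.1, le_trans ?_ (hXk i)⟩
    exact ((hD3 i).2.2).monotoneOn (Set.mem_Ici.2 hx.1)
      (Set.mem_Ici.2 (hrbar_pos i).le) hx.2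
  -- phi := ginv ∘ a
  have hphi_mem : ∀ (i : Fin (m+1)) (q : ℝ), 0 ≤ q →
      ginv i (a i q) ∈ Set.Icc 0 (rbar i) := fun i q hq => (hg i _ (ha_mem i q hq)).1
  have hphi_eq : ∀ (i : Fin (m+1)) (q : ℝ), 0 ≤ q →
      dr i (ginv i (a i q)) = a i q := fun i q hq => (hg i _ (ha_mem i q hq)).2
  have hphi_pos : ∀ (i : Fin (m+1)) (q : ℝ), 0 ≤ q → 0 < ginv i (a i q) := by
    intro i q hq
    rcases eq_or_lt_of_le (hphi_mem i q hq).1 with h | h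
    · exfalso
      have he := hphi_eq i q hq
      rw [← h, (hD2 i).1] at he
      exact absurd he.symm (ne_of_gt (ha_pos i q hq))
    · exact h
  -- the per-gene map F
  set F : Fin (m+1) → ℝ → ℝ := fun i q => hinv i (k i (ginv i (a i q))) with hFdef
  have hkphi_mem : ∀ (i : Fin (m+1)) (q : ℝ), 0 ≤ q →
      k i (ginv i (a i q)) ∈ Set.Icc 0 (dp i (X i)) := fun i q hq =>
    hk_mem i _ (hphi_mem i q hq)
  have hF_mem : ∀ (i : Fin (m+1)) (q : ℝ), 0 ≤ q → F i q ∈ Set.Icc 0 (X i) :=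
    fun i q hq => (hh i _ (hkphi_mem i q hq)).1
  have hF_eq : ∀ (i : Fin (m+1)) (q : ℝ), 0 ≤ q →
      dp i (F i q) = k i (ginv i (a i q)) := fun i q hq => (hh i _ (hkphi_mem i q hq)).2
  have hF_pos : ∀ (i : Fin (m+1)) (q : ℝ), 0 ≤ q → 0 < F i q := by
    intro i q hq
    rcases eq_or_lt_of_le (hF_mem i q hq).1 with h | h
    · exfalso
      have he := hF_eq i q hq
      rw [← h, (hD2 i).2.1] at he
      have hkpos : 0 < k i (ginv i (a i q)) := by
        have := (hD3 i).2.2 (Set.mem_Ici.2 le_rfl)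
          (Set.mem_Ici.2 (hphi_pos i q hq).le) (hphi_pos i q hq)
        rw [(hD2 i).2.2] at this
        exact this
      exact absurd he.symm (ne_of_gt hkpos)
    · exact h
  have hF_anti : ∀ i : Fin (m+1), StrictAntiOn (F i) (Set.Ici 0) := by
    intro i x hx y hy hxy
    have hax : a i y < a i x := hA3 i hx hy hxy
    have hphix := hphi_mem i x hx
    have hphiy := hphi_mem i y hy
    have h2 : ginv i (a i y) < ginv i (a i x) := by
      by_contra hcon
      push_neg at hcon
      have := ((hD3 i).1).monotoneOn (Set.mem_Ici.2 hphix.1)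
        (Set.mem_Ici.2 hphiy.1) hcon
      rw [hphi_eq i x hx, hphi_eq i y hy] at this
      linarith
    have h3 : k i (ginv i (a i y)) < k i (ginv i (a i x)) :=
      (hD3 i).2.2 (Set.mem_Ici.2 hphiy.1) (Set.mem_Ici.2 hphix.1) h2
    by_contra hcon
    push_neg at hcon
    have := ((hD3 i).2.1).monotoneOn (Set.mem_Ici.2 (hF_mem i x hx).1)
      (Set.mem_Ici.2 (hF_mem i y hy).1) hcon
    rw [hF_eq i x hx, hF_eq i y hy] at this
    linarith
  have hF_cont : ∀ i : Fin (m+1), ContinuousOn (F i) (Set.Ici 0) := by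
    intro i
    have c1 : ContinuousOn (a i) (Set.Ici 0) := (hA1 i).continuousOn
    have c2 : ContinuousOn (fun q => ginv i (a i q)) (Set.Ici 0) :=
      (hgc i).comp c1 (fun q hq => ha_mem i q hq)
    have c3 : ContinuousOn (k i) (Set.Ici 0) := (hD1 i).2.2.continuousOn
    have c4 : ContinuousOn (fun q => k i (ginv i (a i q))) (Set.Ici 0) :=
      c3.comp c2 (fun q hq => Set.mem_Ici.2 (hphi_mem i q hq).1)
    exact (hhc i).comp c4 (fun q hq => hkphi_mem i q hq)
  -- iterated map S
  set S : ℕ → ℝ → ℝ := iterComp F with hSdef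
  have hS0 : ∀ q, S 0 q = q := fun q => rfl
  have hSs : ∀ (j : ℕ) (q : ℝ), S (j+1) q = F ((j : ℕ) : Fin (m+1)) (S j q) := fun j q => rfl
  have hS_nonneg : ∀ (j : ℕ) (q : ℝ), 0 ≤ q → 0 ≤ S j q := by
    intro j
    induction j with
    | zero => intro q hq; exact hq
    | succ j ih =>
      intro q hq
      rw [hSs]
      exact (hF_pos _ _ (ih q hq)).le
  have hS_pos : ∀ (j : ℕ) (q : ℝ), 0 ≤ q → 0 < S (j+1) q := by
    intro j q hq
    rw [hSs]
    exact hF_pos _ _ (hS_nonneg j q hq)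
  have hS_cont : ∀ j : ℕ, ContinuousOn (S j) (Set.Ici 0) := by
    intro j
    induction j with
    | zero => exact continuousOn_id
    | succ j ih =>
      have : S (j+1) = fun q => F ((j : ℕ) : Fin (m+1)) (S j q) := rfl
      rw [this]
      exact (hF_cont _).comp ih (fun q hq => Set.mem_Ici.2 (hS_nonneg j q hq))
  have hS_mono : ∀ j : ℕ, (Even j → StrictMonoOn (S j) (Set.Ici 0)) ∧
      (Odd j → StrictAntiOn (S j) (Set.Ici 0)) := by
    intro j
    induction j with
    | zero =>
      constructor
      · intro _ x _ y _ h; exact h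
      · intro h; simp at h
    | succ j ih =>
      constructor
      · intro he
        have ho : Odd j := Nat.Even.sub_odd (by omega) he odd_one
        have hanti := ih.2 ho
        intro x hx y hy hxy
        exact hF_anti _ (Set.mem_Ici.2 (hS_nonneg j y hy))
          (Set.mem_Ici.2 (hS_nonneg j x hx)) (hanti hx hy hxy)
      · intro ho
        have he : Even j := by
          rcases Nat.even_or_odd j with h | h
          · exact h
          · exact absurd (h.add_one) (Nat.not_even_iff_odd.mpr ho)
        have hmono := ih.1 he
        intro x hx y hy hxy
        exact hF_anti _ (Set.mem_Ici.2 (hS_nonneg j x hx))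
          (Set.mem_Ici.2 (hS_nonneg j y hy)) (hmono hx hy hxy)
  -- fixed point of the full cycle map S (m+1)
  set B : ℝ := X ((m : ℕ) : Fin (m+1)) with hBdef
  have hGB : ∀ q : ℝ, 0 ≤ q → S (m+1) q ≤ B := by
    intro q hq
    rw [hSs]
    exact (hF_mem _ _ (hS_nonneg m q hq)).2
  have hB0 : 0 ≤ B := le_trans (hS_pos m 0 le_rfl).le (hGB 0 le_rfl)
  have hHcont : ContinuousOn (fun q => S (m+1) q - q) (Set.Icc 0 B) :=
    ((hS_cont (m+1)).mono Set.Icc_subset_Ici_self).sub continuousOn_id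
  have hzmem : (0:ℝ) ∈ Set.Icc ((fun q => S (m+1) q - q) B) ((fun q => S (m+1) q - q) 0) := by
    constructor
    · have := hGB B hB0
      simp only
      linarith
    · have := hS_pos m 0 le_rfl
      simp only
      linarith
  obtain ⟨qs, hqs_mem, hqs⟩ := intermediate_value_Icc' hB0 hHcont hzmem
  have hqs0 : 0 ≤ qs := hqs_mem.1
  have hfix : S (m+1) qs = qs := by
    simp only at hqs
    linarith
  have hqs_pos : 0 < qs := hfix ▸ hS_pos m qs hqs0
  have hGanti : StrictAntiOn (S (m+1)) (Set.Ici 0) := (hS_mono (m+1)).2 hn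
  have hfix_uniq : ∀ q : ℝ, 0 ≤ q → S (m+1) q = q → q = qs := by
    intro q hq hfq
    rcases lt_trichotomy q qs with h | h | h
    · have := hGanti (Set.mem_Ici.2 hq) (Set.mem_Ici.2 hqs0) h
      rw [hfq, hfix] at this
      linarith
    · exact h
    · have := hGanti (Set.mem_Ici.2 hqs0) (Set.mem_Ici.2 hq) h
      rw [hfq, hfix] at this
      linarith
  -- the steady state
  set p : Fin (m+1) → ℝ := fun i => S (i.val + 1) qs with hpdef
  set r : Fin (m+1) → ℝ := fun i => ginv i (a i (p (i - 1))) with hrdef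
  have hpm1 : ∀ i : Fin (m+1), p (i - 1) = S i.val qs := by
    intro i
    by_cases hi : i.val = 0
    · have hi0 : i = 0 := Fin.ext hi
      rw [hi0, fin_zero_sub_one]
      have hcast : ((m + 1 - 1 : ℕ) : Fin (m + 1)) = ((m : ℕ) : Fin (m+1)) := by norm_num
      rw [hcast]
      show S (((m : ℕ) : Fin (m+1)).val + 1) qs = S (0 : Fin (m+1)).val qs
      rw [Fin.val_cast_of_lt (Nat.lt_succ_self m), Fin.val_zero]
      exact hfix
    · show S ((i - 1).val + 1) qs = S i.val qs
      have hvv : (i : ℕ) - 1 + 1 = (i : ℕ) := by omega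
      rw [fin_sub_one_val i hi, hvv]
  have hp_nonneg : ∀ i : Fin (m+1), 0 ≤ p i := fun i => (hS_pos i.val qs hqs0).le
  have hpm1_nonneg : ∀ i : Fin (m+1), 0 ≤ p (i - 1) := by
    intro i
    rw [hpm1 i]
    exact hS_nonneg i.val qs hqs0
  have hpF : ∀ i : Fin (m+1), p i = F i (p (i - 1)) := by
    intro i
    rw [hpm1 i]
    have h1 : S (i.val + 1) qs = F ((i.val : ℕ) : Fin (m+1)) (S i.val qs) := rfl
    show S (i.val + 1) qs = F i (S i.val qs)
    rw [h1, Fin.cast_val_eq_self]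
  have hdr_r : ∀ i : Fin (m+1), dr i (r i) = a i (p (i - 1)) := fun i =>
    hphi_eq i (p (i - 1)) (hpm1_nonneg i)
  have hr_pos : ∀ i : Fin (m+1), 0 < r i := fun i =>
    hphi_pos i (p (i - 1)) (hpm1_nonneg i)
  have hdp_p : ∀ i : Fin (m+1), dp i (p i) = k i (r i) := by
    intro i
    rw [hpF i]
    exact hF_eq i (p (i - 1)) (hpm1_nonneg i)
  refine ⟨(r, p), ⟨hr_pos, fun i => hS_pos i.val qs hqs0, hdr_r, hdp_p⟩, ?_⟩
  -- uniqueness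
  rintro ⟨r', p'⟩ ⟨h1, h2, h3, h4⟩
  have hp'_nonneg : ∀ j : Fin (m+1), 0 ≤ p' j := fun j => (h2 j).le
  have hr'_eq : ∀ i : Fin (m+1), r' i = ginv i (a i (p' (i - 1))) := by
    intro i
    have hmem : a i (p' (i - 1)) ∈ Set.Icc 0 (a i 0) := ha_mem i _ (hp'_nonneg _)
    have hginv := hg i _ hmem
    refine ((hD3 i).1).injOn (Set.mem_Ici.2 (h1 i).le) (Set.mem_Ici.2 hginv.1.1) ?_
    rw [h3 i, hginv.2]
  have hr'_le : ∀ i : Fin (m+1), r' i ≤ rbar i := by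
    intro i
    by_contra hcon
    push_neg at hcon
    have := (hD3 i).1 (Set.mem_Ici.2 (hrbar_pos i).le) (Set.mem_Ici.2 (h1 i).le) hcon
    rw [hrbar i, h3 i] at this
    have hle := (ha_mem i _ (hp'_nonneg (i - 1))).2
    linarith
  have hp'_eq : ∀ i : Fin (m+1), p' i = F i (p' (i - 1)) := by
    intro i
    have hkmem : k i (r' i) ∈ Set.Icc 0 (dp i (X i)) :=
      hk_mem i (r' i) ⟨(h1 i).le, hr'_le i⟩
    have hhinv := hh i _ hkmem
    have heq : p' i = hinv i (k i (r' i)) := by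
      refine ((hD3 i).2.1).injOn (Set.mem_Ici.2 (hp'_nonneg i)) (Set.mem_Ici.2 hhinv.1.1) ?_
      rw [h4 i, hhinv.2]
    rw [heq, hr'_eq i]
  set q' : ℝ := p' ((0 : Fin (m+1)) - 1) with hq'def
  have hchain : ∀ j : ℕ, j < m + 1 → p' ((j : ℕ) : Fin (m+1)) = S (j+1) q' := by
    intro j
    induction j with
    | zero =>
      intro _
      have h0 : ((0 : ℕ) : Fin (m+1)) = 0 := Nat.cast_zero
      rw [h0, hp'_eq 0]
      have hs1 : S 1 q' = F ((0 : ℕ) : Fin (m+1)) (S 0 q') := rfl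
      rw [hs1, h0, hS0]
    | succ j ih =>
      intro hj
      have hj' : j < m + 1 := by omega
      rw [hp'_eq (((j+1 : ℕ)) : Fin (m+1)), fin_cast_succ_sub_one hj, ih hj']
      have hs2 : S (j+2) q' = F ((j + 1 : ℕ) : Fin (m+1)) (S (j+1) q') := rfl
      rw [hs2]
  have hq'_fix : S (m+1) q' = q' := by
    have h0 : (0 : Fin (m+1)) - 1 = ((m : ℕ) : Fin (m+1)) := by
      rw [fin_zero_sub_one]
      norm_num
    have hq'm : q' = p' ((m : ℕ) : Fin (m+1)) := by rw [hq'def, h0]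
    conv_rhs => rw [hq'm, hchain m (Nat.lt_succ_self m)]
  have hq'_pos : 0 < q' := h2 _
  have hq'qs : q' = qs := hfix_uniq q' hq'_pos.le hq'_fix
  have hp'p : p' = p := by
    funext i
    have hc := hchain i.val i.isLt
    rw [Fin.cast_val_eq_self i] at hc
    rw [hc, hq'qs]
  have hr'r : r' = r := by
    funext i
    rw [hr'_eq i, hp'p]
  exact Prod.ext hr'r hp'p
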